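/- Let (β_n) be a sequence of positive reals with n² β_n → ∞ and n β_n log log n → 0 as n → ∞. For x ≥ 0 set φ_n(x) = x/√(2 log(n² β_n)) + √(2 log(n² β_n)) − log log(n² β_n)/√(2 log(n² β_n)). Then for every fixed x ≥ 0, S_n(φ_n(x)) := Σ_{i=1}^{n} Q( i β_n/2 , φ_n(x)²/2 ) → e^{−x}/4 as n → ∞, where Q(a,z) = (1/Γ(a)) ∫_z^∞ t^{a−1} e^{−t} dt is the regularized upper incomplete Gamma function. -/

import Mathlib

open Filter Real Set MeasureTheory

/-- The regularized upper incomplete Gamma function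
`Q(a,z) = (1/Γ(a)) ∫_z^∞ t^(a-1) e^(-t) dt`. -/
noncomputable def regIncGamma (a z : ℝ) : ℝ :=
  (1 / Real.Gamma a) * ∫ t in Set.Ioi z, t ^ (a - 1) * Real.exp (-t)

lemma myintegral_exp_neg_mul_Ioi {c z : ℝ} (hc : 0 < c) :
    ∫ t in Ioi z, Real.exp (-(c*t)) = Real.exp (-(c*z))/c := by
  have h := MeasureTheory.integral_comp_mul_left_Ioi (fun t => Real.exp (-t)) z hc
  simp only [integral_exp_neg_Ioi, smul_eq_mul] at h
  rw [h]
  field_simp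

lemma myIntegrableOn (a z : ℝ) (ha : 0 < a) (hz : 0 ≤ z) :
    IntegrableOn (fun t : ℝ => t ^ (a-1) * Real.exp (-t)) (Ioi z) := by
  have := (Real.GammaIntegral_convergent ha).mono_set (Ioi_subset_Ioi hz)
  exact this.congr_fun (fun t _ => mul_comm _ _) measurableSet_Ioi

lemma myIntegral_bounds {a z : ℝ} (ha : 0 < a) (ha1 : a ≤ 1) (hz : 1 ≤ z) :
    Real.exp (-z)/(z+1) ≤ (∫ t in Ioi z, t ^ (a-1) * Real.exp (-t)) ∧
    (∫ t in Ioi z, t ^ (a-1) * Real.exp (-t)) ≤ z ^ (a-1) * Real.exp (-z) := by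
  have hz0 : (0:ℝ) < z := by linarith
  have hint := myIntegrableOn a z ha (by linarith)
  constructor
  · have hlow : ∀ t ∈ Ioi z, Real.exp 1 / z * Real.exp (-((1+1/z)*t)) ≤ t ^ (a-1) * Real.exp (-t) := by
      intro t ht
      have ht1 : (1:ℝ) ≤ t := le_trans hz (le_of_lt ht)
      have ht0 : (0:ℝ) < t := by linarith
      have h1 : t⁻¹ ≤ t ^ (a-1) := by
        have : t ^ (a-1) = t ^ a * t⁻¹ := by
          rw [Real.rpow_sub ht0, Real.rpow_one]; ring
        rw [this]
        nlinarith [Real.one_le_rpow ht1 ha.le, inv_pos.mpr ht0]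
      have h2 : Real.exp 1 / z * Real.exp (-((1+1/z)*t)) ≤ t⁻¹ * Real.exp (-t) := by
        have key : Real.exp (1 - t/z) ≤ z/t := by
          have h3 : t/z ≤ Real.exp (t/z - 1) := by
            have := Real.add_one_le_exp (t/z - 1); linarith
          rw [show (1 - t/z) = -(t/z-1) by ring, Real.exp_neg]
          rw [inv_le_comm₀ (Real.exp_pos _) (by positivity)]
          calc (z/t)⁻¹ = t/z := by field_simp
          _ ≤ Real.exp (t/z-1) := h3
        have heq : Real.exp 1 / z * Real.exp (-((1+1/z)*t)) = (Real.exp (1 - t/z)/z) * Real.exp (-t) := by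
          rw [div_mul_eq_mul_div, div_mul_eq_mul_div, ← Real.exp_add, ← Real.exp_add]
          congr 2
          field_simp
          ring
        rw [heq]
        apply mul_le_mul_of_nonneg_right _ (Real.exp_pos _).le
        rw [div_le_iff₀ hz0]
        calc Real.exp (1 - t/z) ≤ z/t := key
        _ = t⁻¹ * z := by ring
      calc Real.exp 1 / z * Real.exp (-((1+1/z)*t)) ≤ t⁻¹ * Real.exp (-t) := h2
      _ ≤ t ^ (a-1) * Real.exp (-t) := mul_le_mul_of_nonneg_right h1 (Real.exp_pos _).le
    have hc : (0:ℝ) < 1 + 1/z := by positivity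
    have hint2 : IntegrableOn (fun t : ℝ => Real.exp 1 / z * Real.exp (-((1+1/z)*t))) (Ioi z) := by
      apply Integrable.const_mul
      have := exp_neg_integrableOn_Ioi z hc
      exact this.congr_fun (fun t _ => by ring_nf) measurableSet_Ioi
    have hmono := setIntegral_mono_on hint2 hint measurableSet_Ioi hlow
    have hval : ∫ t in Ioi z, Real.exp 1 / z * Real.exp (-((1+1/z)*t)) = Real.exp (-z)/(z+1) := by
      rw [MeasureTheory.integral_const_mul, myintegral_exp_neg_mul_Ioi hc]
      rw [show -((1+1/z)*z) = -z - 1 by field_simp; ring, Real.exp_sub]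
      field_simp
    linarith [hmono, hval.symm.le]
  · have hup : ∀ t ∈ Ioi z, t ^ (a-1) * Real.exp (-t) ≤ z ^ (a-1) * Real.exp (-t) := by
      intro t ht
      apply mul_le_mul_of_nonneg_right _ (Real.exp_pos _).le
      exact Real.rpow_le_rpow_of_nonpos hz0 (le_of_lt ht) (by linarith)
    have hint2 : IntegrableOn (fun t : ℝ => z ^ (a-1) * Real.exp (-t)) (Ioi z) := by
      apply Integrable.const_mul
      have := exp_neg_integrableOn_Ioi z one_pos
      exact this.congr_fun (fun t _ => by ring_nf) measurableSet_Ioi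
    have hmono := setIntegral_mono_on hint hint2 measurableSet_Ioi hup
    rwa [MeasureTheory.integral_const_mul, integral_exp_neg_Ioi] at hmono

lemma myGamma_add_one_le {a : ℝ} (h0 : 0 ≤ a) (h1 : a ≤ 1) : Real.Gamma (a+1) ≤ 1 := by
  have h := Real.convexOn_Gamma.2 (by norm_num : (1:ℝ) ∈ Ioi (0:ℝ))
    (by norm_num : (2:ℝ) ∈ Ioi (0:ℝ)) (by linarith : (0:ℝ) ≤ 1 - a) h0 (by ring)
  have : (1-a) • (1:ℝ) + a • (2:ℝ) = a + 1 := by simp; ring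
  rw [this] at h
  simpa [Real.Gamma_one, Real.Gamma_two] using h

lemma one_sub_le_myGamma_add_one {a : ℝ} (h0 : 0 < a) : 1 - 2*a ≤ Real.Gamma (a+1) := by
  have h := Real.convexOn_Gamma.slope_mono_adjacent
    (by norm_num : (1/2:ℝ) ∈ Ioi (0:ℝ)) (by positivity : (0:ℝ) < 1 + a)
    (by norm_num : (1/2:ℝ) < 1) (by linarith : (1:ℝ) < 1 + a)
  rw [Real.Gamma_one, Real.Gamma_one_half_eq] at h
  have hπ : Real.sqrt π ≤ 2 := by
    rw [show (2:ℝ) = Real.sqrt 4 by rw [show (4:ℝ) = 2^2 by norm_num, Real.sqrt_sq]; norm_num]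
    exact Real.sqrt_le_sqrt (by linarith [Real.pi_le_four])
  have h2 : (1 - Real.sqrt π)/(1 - 1/2) ≤ (Real.Gamma (1+a) - 1)/(1 + a - 1) := h
  have h3 : (1 - Real.sqrt π)/(1 - 1/2) ≥ -2 := by
    rw [ge_iff_le, le_div_iff₀ (by norm_num)]; linarith
  have h4 : -2 ≤ (Real.Gamma (1+a) - 1)/a := by
    simpa using le_trans h3 h2
  rw [le_div_iff₀ h0] at h4
  rw [add_comm a 1]
  linarith

lemma regIncGamma_bounds {a z A : ℝ} (ha : 0 < a) (haA : a ≤ A) (hA : A ≤ 1/4) (hz : 1 ≤ z) :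
    a * (Real.exp (-z)/(z+1)) ≤ regIncGamma a z ∧
    regIncGamma a z ≤ a / (1 - 2*A) * (z ^ A * Real.exp (-z) / z) := by
  have hz0 : (0:ℝ) < z := by linarith
  have hΓ : 0 < Real.Gamma a := Real.Gamma_pos_of_pos ha
  have hrec : Real.Gamma (a+1) = a * Real.Gamma a := Real.Gamma_add_one ha.ne'
  have ha1 : a ≤ 1 := by linarith
  have hup : a * Real.Gamma a ≤ 1 := by
    rw [← hrec]; exact myGamma_add_one_le ha.le ha1
  have hlo : 1 - 2*A ≤ a * Real.Gamma a := by
    rw [← hrec]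
    calc 1 - 2*A ≤ 1 - 2*a := by linarith
    _ ≤ Real.Gamma (a+1) := one_sub_le_myGamma_add_one ha
  have hAd : (0:ℝ) < 1 - 2*A := by linarith
  have hinv1 : a ≤ 1 / Real.Gamma a := by
    rw [le_div_iff₀ hΓ]; linarith
  have hinv2 : 1 / Real.Gamma a ≤ a / (1 - 2*A) := by
    have h1 : 1 / Real.Gamma a = a / (a * Real.Gamma a) := by
      field_simp
    rw [h1]
    exact div_le_div_of_nonneg_left ha.le hAd hlo
  obtain ⟨hI1, hI2⟩ := myIntegral_bounds ha ha1 hz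
  have hIlow : (0:ℝ) ≤ Real.exp (-z)/(z+1) := by positivity
  have hI0 : (0:ℝ) ≤ ∫ t in Ioi z, t ^ (a-1) * Real.exp (-t) := le_trans hIlow hI1
  constructor
  · exact mul_le_mul hinv1 hI1 hIlow (by positivity)
  · apply mul_le_mul hinv2 _ hI0 (by positivity)
    calc (∫ t in Ioi z, t ^ (a-1) * Real.exp (-t)) ≤ z ^ (a-1) * Real.exp (-z) := hI2
    _ ≤ z ^ A * Real.exp (-z) / z := by
        rw [Real.rpow_sub hz0, Real.rpow_one, div_mul_eq_mul_div, mul_div_assoc,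
          mul_div_assoc]
        apply mul_le_mul_of_nonneg_right (Real.rpow_le_rpow_of_exponent_le hz haA)
        positivity

lemma myGauss (n : ℕ) : ∑ i ∈ Finset.Icc 1 n, (i:ℝ) = n*(n+1)/2 := by
  induction n with
  | zero => simp
  | succ m ih =>
    rw [Finset.sum_Icc_succ_top (by omega : 1 ≤ m + 1), ih]
    push_cast
    ring

lemma mySum_bounds {β z : ℝ} (hβ : 0 < β) {n : ℕ} (hz : 1 ≤ z)
    (hA : (n:ℝ)*β/2 ≤ 1/4) :
    (n:ℝ)*((n:ℝ)+1)*β/4 * (Real.exp (-z)/(z+1)) ≤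
      (∑ i ∈ Finset.Icc 1 n, regIncGamma ((i:ℝ)*β/2) z) ∧
    (∑ i ∈ Finset.Icc 1 n, regIncGamma ((i:ℝ)*β/2) z) ≤
      (n:ℝ)*((n:ℝ)+1)*β/4 / (1 - 2*((n:ℝ)*β/2)) * (z ^ ((n:ℝ)*β/2) * Real.exp (-z) / z) := by
  set A := (n:ℝ)*β/2 with hAdef
  have hterm : ∀ i ∈ Finset.Icc 1 n,
      (i:ℝ)*β/2 * (Real.exp (-z)/(z+1)) ≤ regIncGamma ((i:ℝ)*β/2) z ∧
      regIncGamma ((i:ℝ)*β/2) z ≤ (i:ℝ)*β/2 / (1 - 2*A) * (z ^ A * Real.exp (-z) / z) := by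
    intro i hi
    rw [Finset.mem_Icc] at hi
    have h1 : (0:ℝ) < (i:ℝ)*β/2 := by
      have : (1:ℝ) ≤ (i:ℝ) := by exact_mod_cast hi.1
      positivity
    have h2 : (i:ℝ)*β/2 ≤ A := by
      have : (i:ℝ) ≤ (n:ℝ) := by exact_mod_cast hi.2
      rw [hAdef]
      have := hβ.le
      nlinarith
    exact regIncGamma_bounds h1 h2 hA hz
  constructor
  · calc (n:ℝ)*((n:ℝ)+1)*β/4 * (Real.exp (-z)/(z+1))
        = ∑ i ∈ Finset.Icc 1 n, (i:ℝ)*β/2 * (Real.exp (-z)/(z+1)) := by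
          have h : ∀ i ∈ Finset.Icc 1 n, (i:ℝ)*β/2 * (Real.exp (-z)/(z+1))
              = (i:ℝ) * (β/2 * (Real.exp (-z)/(z+1))) := fun i _ => by ring
          rw [Finset.sum_congr rfl h, ← Finset.sum_mul, myGauss]
          ring
    _ ≤ _ := Finset.sum_le_sum (fun i hi => (hterm i hi).1)
  · calc (∑ i ∈ Finset.Icc 1 n, regIncGamma ((i:ℝ)*β/2) z)
        ≤ ∑ i ∈ Finset.Icc 1 n, (i:ℝ)*β/2 / (1 - 2*A) * (z ^ A * Real.exp (-z) / z) :=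
          Finset.sum_le_sum (fun i hi => (hterm i hi).2)
    _ = (n:ℝ)*((n:ℝ)+1)*β/4 / (1 - 2*A) * (z ^ A * Real.exp (-z) / z) := by
          have : ∀ i ∈ Finset.Icc 1 n, (i:ℝ)*β/2 / (1 - 2*A) * (z ^ A * Real.exp (-z) / z)
              = (i:ℝ) * (β/2 / (1 - 2*A) * (z ^ A * Real.exp (-z) / z)) := by
            intro i _; ring
          rw [Finset.sum_congr rfl this, ← Finset.sum_mul, myGauss]
          ring

set_option maxHeartbeats 1000000 in
/-- **Convergence of the sum of chi survival functions, regime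
`1/n² ≪ β ≪ 1/(n log log n)`:** `S_n(φ_n(x)) → e^{-x}/4`. -/
theorem sum_survival_first_regime (β : ℕ → ℝ) (hβpos : ∀ n, 0 < β n)
    (hβ1 : Tendsto (fun n : ℕ => (n : ℝ) ^ 2 * β n) atTop atTop)
    (hβ2 : Tendsto (fun n : ℕ => (n : ℝ) * β n * Real.log (Real.log n)) atTop (nhds 0))
    (φ : ℕ → ℝ → ℝ)
    (hφ : ∀ n : ℕ, ∀ x : ℝ, 0 ≤ x →
      φ n x = x / Real.sqrt (2 * Real.log ((n : ℝ) ^ 2 * β n))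
        + Real.sqrt (2 * Real.log ((n : ℝ) ^ 2 * β n))
        - Real.log (Real.log ((n : ℝ) ^ 2 * β n))
            / Real.sqrt (2 * Real.log ((n : ℝ) ^ 2 * β n)))
    (x : ℝ) (hx : 0 ≤ x) :
    Tendsto (fun n : ℕ =>
        ∑ i ∈ Finset.Icc 1 n, regIncGamma ((i : ℝ) * β n / 2) (φ n x ^ 2 / 2))
      atTop (nhds (Real.exp (-x) / 4)) := by
  set B : ℕ → ℝ := fun n => (n:ℝ)^2 * β n with hBdef
  set L : ℕ → ℝ := fun n => Real.log (B n) with hLdef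
  set ℓ : ℕ → ℝ := fun n => Real.log (L n) with hℓdef
  set u : ℕ → ℝ := fun n => x - ℓ n with hudef
  set z : ℕ → ℝ := fun n => L n + u n + (u n)^2/(4 * L n) with hzdef
  set A : ℕ → ℝ := fun n => (n:ℝ) * β n / 2 with hAdef
  have hL : Tendsto L atTop atTop := Real.tendsto_log_atTop.comp hβ1
  have hL1 : ∀ᶠ n in atTop, 1 ≤ L n := hL.eventually_ge_atTop 1
  -- n β → 0
  have hloglog : Tendsto (fun n : ℕ => Real.log (Real.log n)) atTop atTop :=
    Real.tendsto_log_atTop.comp (Real.tendsto_log_atTop.comp tendsto_natCast_atTop_atTop)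
  have hnβ0 : Tendsto (fun n : ℕ => (n:ℝ) * β n) atTop (nhds 0) := by
    apply tendsto_of_tendsto_of_tendsto_of_le_of_le' tendsto_const_nhds hβ2
    · filter_upwards [eventually_ge_atTop 0] with n _
      exact mul_nonneg (Nat.cast_nonneg n) (hβpos n).le
    · filter_upwards [hloglog.eventually_ge_atTop 1] with n hn
      have h0 : 0 ≤ (n:ℝ) * β n := mul_nonneg (Nat.cast_nonneg n) (hβpos n).le
      nlinarith [mul_nonneg h0 (by linarith : 0 ≤ Real.log (Real.log n) - 1)]
  have hA0 : Tendsto A atTop (nhds 0) := by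
    simpa [hAdef] using hnβ0.div_const 2
  have hBpos : ∀ᶠ n in atTop, 0 < B n := hβ1.eventually_gt_atTop 0
  -- identify φ² / 2 with z
  have heq : ∀ᶠ n in atTop, φ n x ^ 2 / 2 = z n := by
    filter_upwards [hL1] with n hLn
    have hLpos : (0:ℝ) < L n := by linarith
    have hs2 : Real.sqrt (2 * L n) ^ 2 = 2 * L n := Real.sq_sqrt (by linarith)
    have hs0 : Real.sqrt (2 * L n) ≠ 0 := (Real.sqrt_pos.mpr (by linarith)).ne'
    rw [hφ n x hx]
    rw [show Real.log ((n:ℝ)^2 * β n) = L n from rfl]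
    have h1 : x / Real.sqrt (2 * L n) + Real.sqrt (2 * L n) - ℓ n / Real.sqrt (2 * L n)
        = (x - ℓ n + Real.sqrt (2 * L n)^2) / Real.sqrt (2 * L n) := by
      field_simp
      ring
    rw [h1, div_pow, hs2, hzdef]
    show (x - ℓ n + 2 * L n) ^ 2 / (2 * L n) / 2 = L n + u n + u n ^ 2 / (4 * L n)
    rw [hudef]
    field_simp
    ring
  -- basic limits
  have hlogid : Tendsto (fun y : ℝ => Real.log y / y) atTop (nhds 0) := by
    simpa using Real.tendsto_pow_log_div_mul_add_atTop 1 0 1 one_ne_zero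
  have hℓL : Tendsto (fun n => ℓ n / L n) atTop (nhds 0) := hlogid.comp hL
  have hinvL : Tendsto (fun n => (L n)⁻¹) atTop (nhds 0) := hL.inv_tendsto_atTop
  have huL : Tendsto (fun n => u n / L n) atTop (nhds 0) := by
    have h1 : Tendsto (fun n => x * (L n)⁻¹ - ℓ n / L n) atTop (nhds 0) := by
      simpa using (hinvL.const_mul x).sub hℓL
    apply h1.congr'
    filter_upwards [hL1] with n hLn
    rw [hudef]
    field_simp
  have hu2L : Tendsto (fun n => (u n)^2 / (4 * L n)) atTop (nhds 0) := by
    have hsq : Tendsto (fun y : ℝ => Real.log y ^ 2 / (4 * y)) atTop (nhds 0) := by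
      simpa using Real.tendsto_pow_log_div_mul_add_atTop 4 0 2 (by norm_num)
    have hlin : Tendsto (fun y : ℝ => Real.log y / (4 * y)) atTop (nhds 0) := by
      simpa using Real.tendsto_pow_log_div_mul_add_atTop 4 0 1 (by norm_num)
    have hx4 : Tendsto (fun y : ℝ => x^2 / (4 * y)) atTop (nhds 0) := by
      have : Tendsto (fun y : ℝ => 4 * y) atTop atTop :=
        (tendsto_id (α := ℝ)).const_mul_atTop (by norm_num)
      simpa [div_eq_mul_inv] using this.inv_tendsto_atTop.const_mul (x^2)
    have hcomb : Tendsto (fun y : ℝ => x^2/(4*y) - 2*x*(Real.log y/(4*y)) + Real.log y^2/(4*y))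
        atTop (nhds 0) := by
      simpa using (hx4.sub (hlin.const_mul (2*x))).add hsq
    have hmain : Tendsto (fun y : ℝ => (x - Real.log y)^2/(4*y)) atTop (nhds 0) := by
      apply hcomb.congr'
      filter_upwards [eventually_gt_atTop (0:ℝ)] with y hy
      field_simp
      ring
    exact hmain.comp hL
  have hzL : Tendsto (fun n => z n / L n) atTop (nhds 1) := by
    have h1 : Tendsto (fun n => 1 + u n / L n + (u n)^2/(4 * L n) * (L n)⁻¹) atTop (nhds 1) := by
      have := (tendsto_const_nhds (x := (1:ℝ)) (f := atTop (α := ℕ))).add huL |>.add (hu2L.mul hinvL)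
      simpa using this
    apply h1.congr'
    filter_upwards [hL1] with n hLn
    have hLpos : (0:ℝ) < L n := by linarith
    rw [hzdef]
    field_simp
  have hztop : Tendsto z atTop atTop := by
    have h1 : Tendsto (fun n => (z n / L n) * L n) atTop atTop := hzL.pos_mul_atTop one_pos hL
    apply h1.congr'
    filter_upwards [hL1] with n hLn
    field_simp
  have hz1 : ∀ᶠ n in atTop, 1 ≤ z n := hztop.eventually_ge_atTop 1
  -- A * log z → 0
  have hzLlog : Tendsto (fun n => Real.log (z n / L n)) atTop (nhds 0) := by
    have := (Real.continuousAt_log one_ne_zero).tendsto.comp hzL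
    simpa [Function.comp_def] using this
  have hAℓ : Tendsto (fun n => A n * ℓ n) atTop (nhds 0) := by
    apply tendsto_of_tendsto_of_tendsto_of_le_of_le' tendsto_const_nhds (by simpa using hβ2.div_const 2)
    · filter_upwards [hL1] with n hLn
      have h0 : 0 ≤ A n := by
        rw [hAdef]
        have := (hβpos n).le
        have := Nat.cast_nonneg (α := ℝ) n
        positivity
      exact mul_nonneg h0 (Real.log_nonneg hLn)
    · filter_upwards [hL1, hBpos, hnβ0.eventually_lt_const one_pos,
        eventually_ge_atTop 3] with n h1 h2 h3 h4
      have hn3 : (3:ℝ) ≤ (n:ℝ) := by exact_mod_cast h4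
      have hBn : B n ≤ (n:ℝ) := by
        have : B n = (n:ℝ) * ((n:ℝ) * β n) := by rw [hBdef]; ring
        rw [this]
        calc (n:ℝ) * ((n:ℝ) * β n) ≤ (n:ℝ) * 1 :=
          mul_le_mul_of_nonneg_left h3.le (by linarith)
        _ = (n:ℝ) := mul_one _
      have hLn : L n ≤ Real.log n := Real.log_le_log h2 hBn
      have hℓn : ℓ n ≤ Real.log (Real.log n) := by
        have : (0:ℝ) < L n := by linarith
        exact Real.log_le_log this hLn
      have hA0' : 0 ≤ A n := by
        rw [hAdef]
        have := (hβpos n).le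
        have := Nat.cast_nonneg (α := ℝ) n
        positivity
      calc A n * ℓ n ≤ A n * Real.log (Real.log n) := mul_le_mul_of_nonneg_left hℓn hA0'
      _ = (n:ℝ) * β n * Real.log (Real.log n) / 2 := by rw [hAdef]; ring
  have hAlogz : Tendsto (fun n => A n * Real.log (z n)) atTop (nhds 0) := by
    have h1 : Tendsto (fun n => A n * ℓ n + A n * Real.log (z n / L n)) atTop (nhds 0) := by
      simpa using hAℓ.add (hA0.mul hzLlog)
    apply h1.congr'
    filter_upwards [hL1, hz1] with n h1 h2
    have hlz : Real.log (z n / L n) = Real.log (z n) - ℓ n := by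
      rw [Real.log_div (by linarith : z n ≠ 0) (by linarith : L n ≠ 0)]
    rw [hlz]
    ring
  have hAsmall : ∀ᶠ n in atTop, A n < 1/8 := hA0.eventually_lt_const (by norm_num)
  have hAnonneg : ∀ (n : ℕ), 0 ≤ A n := by
    intro n
    rw [hAdef]
    have := (hβpos n).le
    have := Nat.cast_nonneg (α := ℝ) n
    positivity
  have hn1 : ∀ᶠ (n:ℕ) in atTop, 1 ≤ n := eventually_ge_atTop 1
  -- exp(-z) decomposition
  have hexpz : ∀ᶠ n in atTop, Real.exp (-z n)
      = (B n)⁻¹ * (L n * Real.exp (-x)) * Real.exp (-((u n)^2/(4*L n))) := by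
    filter_upwards [hL1, hBpos] with n h1 h2
    have hLpos : (0:ℝ) < L n := by linarith
    have e1 : Real.exp (-z n)
        = Real.exp (-L n) * Real.exp (-u n) * Real.exp (-((u n)^2/(4*L n))) := by
      rw [← Real.exp_add, ← Real.exp_add]
      congr 1
      rw [hzdef]
      ring
    have e2 : Real.exp (-L n) = (B n)⁻¹ := by
      rw [Real.exp_neg, Real.exp_log h2]
    have e3 : Real.exp (-u n) = L n * Real.exp (-x) := by
      rw [hudef, show -(x - ℓ n) = ℓ n + -x by ring, Real.exp_add,
        show Real.exp (ℓ n) = L n from Real.exp_log hLpos]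
    rw [e1, e2, e3]
  -- factor limits
  have hf1 : Tendsto (fun n : ℕ => ((n:ℝ)+1)/(n:ℝ)) atTop (nhds 1) := by
    have h : Tendsto (fun n : ℕ => 1 + 1/(n:ℝ)) atTop (nhds 1) := by
      simpa using (tendsto_const_nhds (x := (1:ℝ))).add tendsto_one_div_atTop_nhds_zero_nat
    apply h.congr'
    filter_upwards [hn1] with n hn
    have : (n:ℝ) ≠ 0 := by positivity
    field_simp
  have hf2 : Tendsto (fun n => Real.exp (-((u n)^2/(4*L n)))) atTop (nhds 1) := by
    have h0 : Tendsto (fun n => -((u n)^2/(4* L n))) atTop (nhds 0) := by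
      simpa using hu2L.neg
    have := (Real.continuous_exp.tendsto 0).comp h0
    simpa [Function.comp_def] using this
  have hf3 : Tendsto (fun n => L n/(z n + 1)) atTop (nhds 1) := by
    have h : Tendsto (fun n => (z n/L n + (L n)⁻¹)⁻¹) atTop (nhds 1) := by
      have h0 : Tendsto (fun n => z n/L n + (L n)⁻¹) atTop (nhds 1) := by
        simpa using hzL.add hinvL
      simpa using h0.inv₀ one_ne_zero
    apply h.congr'
    filter_upwards [hL1, hz1] with n h1 h2
    have hLpos : (0:ℝ) < L n := by linarith
    have hzpos : (0:ℝ) < z n + 1 := by linarith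
    field_simp
  have hf4 : Tendsto (fun n => L n/z n) atTop (nhds 1) := by
    have := hzL.inv₀ one_ne_zero
    simpa [inv_div] using this
  have hf5 : Tendsto (fun n => Real.exp (A n * Real.log (z n))) atTop (nhds 1) := by
    have := (Real.continuous_exp.tendsto 0).comp hAlogz
    simpa [Function.comp_def] using this
  have hf6 : Tendsto (fun n => (1 - 2*A n)⁻¹) atTop (nhds 1) := by
    have h0 : Tendsto (fun n => 1 - 2*A n) atTop (nhds 1) := by
      simpa using (tendsto_const_nhds (x := (1:ℝ))).sub (hA0.const_mul 2)
    simpa using h0.inv₀ one_ne_zero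
  -- lower sequence tendsto
  have hlo : Tendsto (fun n : ℕ => (n:ℝ)*((n:ℝ)+1)*β n/4 * (Real.exp (-z n)/(z n+1)))
      atTop (nhds (Real.exp (-x)/4)) := by
    have hfac : Tendsto (fun n : ℕ => Real.exp (-x)/4 *
        (((n:ℝ)+1)/(n:ℝ) * Real.exp (-((u n)^2/(4*L n))) * (L n/(z n + 1))))
        atTop (nhds (Real.exp (-x)/4)) := by
      have hprod := (hf1.mul hf2).mul hf3
      rw [show ((1:ℝ)*1)*1 = 1 by norm_num] at hprod
      have h2 := hprod.const_mul (Real.exp (-x)/4)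
      rw [mul_one] at h2
      exact h2
    apply hfac.congr'
    filter_upwards [hexpz, hL1, hz1, hn1, hBpos] with n e h1 h2 h3 hB
    have hn0 : (n:ℝ) ≠ 0 := by
      have : (1:ℝ) ≤ (n:ℝ) := by exact_mod_cast h3
      linarith
    have hβn : β n ≠ 0 := (hβpos n).ne'
    have hz0 : z n + 1 ≠ 0 := by linarith
    rw [e, hBdef]
    field_simp
  -- upper sequence tendsto
  have hup : Tendsto (fun n : ℕ => (n:ℝ)*((n:ℝ)+1)*β n/4 / (1 - 2*A n) *
      ((z n) ^ (A n) * Real.exp (-z n) / z n)) atTop (nhds (Real.exp (-x)/4)) := by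
    have hfac : Tendsto (fun n : ℕ => Real.exp (-x)/4 *
        (((n:ℝ)+1)/(n:ℝ) * (1 - 2*A n)⁻¹ * Real.exp (-((u n)^2/(4*L n))) * (L n/z n) *
          Real.exp (A n * Real.log (z n)))) atTop (nhds (Real.exp (-x)/4)) := by
      have hprod := (((hf1.mul hf6).mul hf2).mul hf4).mul hf5
      rw [show ((((1:ℝ)*1)*1)*1)*1 = 1 by norm_num] at hprod
      have h2 := hprod.const_mul (Real.exp (-x)/4)
      rw [mul_one] at h2
      exact h2
    apply hfac.congr'
    filter_upwards [hexpz, hL1, hz1, hn1, hBpos, hAsmall] with n e h1 h2 h3 hB hA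
    have hn0 : (n:ℝ) ≠ 0 := by
      have : (1:ℝ) ≤ (n:ℝ) := by exact_mod_cast h3
      linarith
    have hβn : β n ≠ 0 := (hβpos n).ne'
    have hz0 : (0:ℝ) < z n := by linarith
    have hA0' : 1 - 2*A n ≠ 0 := by linarith
    rw [Real.rpow_def_of_pos hz0, e, hBdef]
    field_simp
  -- sandwich
  apply tendsto_of_tendsto_of_tendsto_of_le_of_le' hlo hup
  · filter_upwards [heq, hz1, hAsmall] with n he h1 h2
    rw [he]
    have hA4 : (n:ℝ)*β n/2 ≤ 1/4 := by
      have : A n = (n:ℝ)*β n/2 := by rw [hAdef]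
      linarith [this ▸ h2.le]
    exact (mySum_bounds (hβpos n) h1 hA4).1
  · filter_upwards [heq, hz1, hAsmall] with n he h1 h2
    rw [he]
    have hA4 : (n:ℝ)*β n/2 ≤ 1/4 := by
      have : A n = (n:ℝ)*β n/2 := by rw [hAdef]
      linarith [this ▸ h2.le]
    exact (mySum_bounds (hβpos n) h1 hA4).2
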